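/- Let A be a separable unital C*-algebra with nontrivial weak extension semigroup Ext_w(A). Then ℂ ⊕ A is not W*-C*-projective: there exist a von Neumann algebra B (namely B(ℓ²)), the quotient map π onto the Calkin algebra, and a unital *-homomorphism from ℂ ⊕ A to the Calkin algebra that admits no lift. More concretely: if ρ : A → B(ℓ²)/K(ℓ²) is an injective unital *-homomorphism that is not weakly equivalent to a trivial extension, then there is no (non-unital) *-homomorphism γ : A → B(ℓ²) with π ∘ γ = ρ. -/

import Mathlib

lemma countable_of_one_le_dist {E : Type*} [MetricSpace E]
    [TopologicalSpace.SeparableSpace E] {s : Set E}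
    (h : s.Pairwise fun x y => 1 ≤ dist x y) : s.Countable := by
  obtain ⟨D, hDc, hDd⟩ := TopologicalSpace.exists_countable_dense E
  have hch : ∀ x : s, ∃ d : D, dist (x : E) (d : E) < 1 / 2 := by
    intro x
    obtain ⟨d, hd1, hd2⟩ := (Metric.dense_iff.mp hDd (x : E) (1 / 2) (by norm_num))
    exact ⟨⟨d, hd2⟩, by simpa [Metric.mem_ball, dist_comm] using hd1⟩
  choose f hf using hch
  have hinj : Function.Injective f := by
    intro x y hxy
    by_contra hne
    have h1 : 1 ≤ dist (x : E) (y : E) :=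
      h x.2 y.2 (fun hc => hne (Subtype.ext hc))
    have h2 : dist (x : E) (y : E) < 1 := by
      calc dist (x : E) (y : E) ≤ dist (x : E) (f x : E) + dist (f x : E) (y : E) :=
            dist_triangle _ _ _
        _ < 1 := by
            have := hf x; have h4 := hf y
            rw [hxy] at this
            rw [dist_comm] at h4
            rw [hxy]
            linarith
    linarith
  have : Countable D := hDc.to_subtype
  have : Countable s := Function.Injective.countable hinj
  exact Set.countable_coe_iff.mp this


lemma orthonormal_one_le_dist {E : Type*} [NormedAddCommGroup E] [InnerProductSpace ℂ E]
    {ι : Type*} {v : ι → E} (hv : Orthonormal ℂ v) {i j : ι} (hij : i ≠ j) :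
    1 ≤ dist (v i) (v j) := by
  have h0 : (inner ℂ (v i) (v j) : ℂ) = 0 := hv.2 hij
  have hsq : ‖v i - v j‖ ^ 2 = 2 := by
    rw [norm_sub_sq (𝕜 := ℂ), hv.1 i, hv.1 j, h0]
    norm_num
  rw [dist_eq_norm]
  nlinarith [norm_nonneg (v i - v j)]

lemma exists_hilbertBasis_nat (E : Type*) [NormedAddCommGroup E] [InnerProductSpace ℂ E]
    [CompleteSpace E] [TopologicalSpace.SeparableSpace E] (hE : ¬ FiniteDimensional ℂ E) :
    Nonempty (HilbertBasis ℕ ℂ E) := by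
  obtain ⟨w, b, hb⟩ := exists_hilbertBasis ℂ E
  have horth : Orthonormal ℂ ((↑) : w → E) := hb ▸ b.orthonormal
  have hcnt : w.Countable := by
    refine countable_of_one_le_dist ?_
    intro x hx y hy hxy
    exact orthonormal_one_le_dist horth (i := ⟨x, hx⟩) (j := ⟨y, hy⟩)
      (fun hc => hxy (congrArg Subtype.val hc))
  have hwinf : w.Infinite := by
    intro hfin
    have hfd : FiniteDimensional ℂ (Submodule.span ℂ w) :=
      FiniteDimensional.span_of_finite ℂ hfin
    have hclosed : IsClosed (Submodule.span ℂ w : Set E) :=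
      Submodule.closed_of_finiteDimensional _
    have hdense := b.dense_span
    rw [hb,
      Subtype.range_coe] at hdense
    have htop : Submodule.span ℂ w = ⊤ := by
      rw [← hdense]
      exact (IsClosed.submodule_topologicalClosure_eq hclosed).symm
    have : FiniteDimensional ℂ E := by
      rw [htop] at hfd
      exact (Submodule.topEquiv (R := ℂ) (M := E)).finiteDimensional
    exact hE this
  haveI : Countable w := hcnt.to_subtype
  haveI : Infinite w := hwinf.to_subtype
  haveI : Encodable w := Encodable.ofCountable w
  haveI : Denumerable w := Denumerable.ofEncodableOfInfinite w
  let e : ℕ ≃ w := (Denumerable.eqv w).symm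
  refine ⟨HilbertBasis.mk (horth.comp e e.injective) ?_⟩
  have hrange : Set.range (((↑) : w → E) ∘ e) = Set.range ((↑) : w → E) := by
    rw [Set.range_comp, e.surjective.range_eq, Set.image_univ]
  rw [hrange, Subtype.range_coe]
  have hdense := b.dense_span
  rw [hb,
    Subtype.range_coe] at hdense
  rw [hdense]


open ContinuousLinearMap in
/-- Proposition 4.17(2), concretely: let `H` be an infinite-dimensional separable Hilbert
space, `π : B(H) → M` a surjective unital *-homomorphism whose kernel consists exactly of
the compact operators (so `M` is the Calkin algebra), `A` a separable unital C*-algebra and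
`ρ : A → M` an injective unital *-homomorphism that is not weakly equivalent to a trivial
extension (i.e. for no isometry `V ∈ B(H)` does `π(V)* ρ(·) π(V)` lift to `B(H)`).
Then `ρ` admits no (possibly non-unital) *-homomorphism lift `γ : A → B(H)`; in particular
`ℂ ⊕ A` is not W*-C*-projective. -/
theorem no_lift_of_nontrivial_extension
    {H : Type*} [NormedAddCommGroup H] [InnerProductSpace ℂ H] [CompleteSpace H]
    [TopologicalSpace.SeparableSpace H] (hinf : ¬ FiniteDimensional ℂ H)
    {M : Type*} [NormedRing M] [StarRing M] [CStarRing M] [CompleteSpace M]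
    [NormedAlgebra ℂ M] [StarModule ℂ M]
    (π : (H →L[ℂ] H) →⋆ₐ[ℂ] M) (hπ : Function.Surjective π)
    (hker : ∀ T : H →L[ℂ] H, π T = 0 ↔ IsCompactOperator ⇑T)
    {A : Type*} [NormedRing A] [StarRing A] [CStarRing A] [CompleteSpace A]
    [NormedAlgebra ℂ A] [StarModule ℂ A] [TopologicalSpace.SeparableSpace A]
    (ρ : A →⋆ₐ[ℂ] M) (hρ : Function.Injective ρ)
    (hnontrivial : ∀ V : H →L[ℂ] H, star V * V = 1 →
      ¬ ∃ γ₀ : A →⋆ₐ[ℂ] (H →L[ℂ] H), ∀ a, π (γ₀ a) = π (star V) * ρ a * π V) :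
    ¬ ∃ γ : A →⋆ₙₐ[ℂ] (H →L[ℂ] H), ∀ a, π (γ a) = ρ a := by
  rintro ⟨γ, hγ⟩
  set P : H →L[ℂ] H := γ 1 with hP
  have hPidem : P * P = P := by rw [hP, ← map_mul, one_mul]
  have hPstar : star P = P := by rw [hP, ← map_star, star_one]
  have hπP : π P = 1 := by rw [hP, hγ, map_one]
  have hcompact : IsCompactOperator ⇑((1 : H →L[ℂ] H) - P) :=
    (hker _).mp (by rw [map_sub, map_one, hπP, sub_self])
  -- the two submodules
  set Kc : Submodule ℂ H := LinearMap.ker (P : H →ₗ[ℂ] H) with hKc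
  set Kr : Submodule ℂ H := LinearMap.ker (((1 : H →L[ℂ] H) - P : H →L[ℂ] H) : H →ₗ[ℂ] H) with hKr
  have hKrclosed : IsClosed (Kr : Set H) := isClosed_ker _
  haveI : CompleteSpace Kr := hKrclosed.completeSpace_coe
  haveI : SecondCountableTopology H := UniformSpace.secondCountable_of_separable H
  haveI : TopologicalSpace.SeparableSpace Kr :=
    TopologicalSpace.SecondCountableTopology.to_separableSpace
  -- Kc is finite dimensional
  have hKcfin : FiniteDimensional ℂ Kc := by
    have hcomp : IsCompactOperator (⇑((1 : H →L[ℂ] H) - P) ∘ ⇑Kc.subtypeL) :=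
      hcompact.comp_clm Kc.subtypeL
    have heq : ⇑((1 : H →L[ℂ] H) - P) ∘ ⇑Kc.subtypeL = (⇑Kc.subtypeL : Kc → H) := by
      funext x
      have hx : P (x : H) = 0 := x.2
      simp [Function.comp, ContinuousLinearMap.sub_apply, hx]
    rw [heq] at hcomp
    have hcb : IsCompact (closure (⇑Kc.subtypeL '' Metric.closedBall 0 1)) := by
      have := IsCompactOperator.isCompact_closure_image_closedBall
        (f := Kc.subtypeL.toLinearMap) hcomp 1
      simpa using this
    have hseteq : (⇑Kc.subtypeL '' Metric.closedBall 0 1 : Set H)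
        = (Kc : Set H) ∩ Metric.closedBall 0 1 := by
      ext x
      constructor
      · rintro ⟨y, hy, rfl⟩
        refine ⟨y.2, ?_⟩
        simpa [Metric.mem_closedBall, dist_eq_norm] using
          (by simpa [Metric.mem_closedBall, dist_eq_norm] using hy : ‖y‖ ≤ 1)
      · rintro ⟨hx1, hx2⟩
        exact ⟨⟨x, hx1⟩, by simpa [Metric.mem_closedBall, dist_eq_norm] using hx2, rfl⟩
    have hsetclosed : IsClosed (⇑Kc.subtypeL '' Metric.closedBall 0 1 : Set H) := by
      rw [hseteq]
      exact (isClosed_ker P).inter Metric.isClosed_closedBall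
    have hcompactset : IsCompact (⇑Kc.subtypeL '' Metric.closedBall 0 1 : Set H) :=
      hcb.of_isClosed_subset hsetclosed subset_closure
    have : IsCompact (Metric.closedBall (0 : Kc) 1) := by
      rw [Topology.IsEmbedding.subtypeVal.isCompact_iff]
      exact hcompactset
    exact FiniteDimensional.of_isCompact_closedBall ℂ zero_lt_one this
  -- Kr is infinite dimensional
  have hKrinf : ¬ FiniteDimensional ℂ Kr := by
    intro hfin
    have hsup : Kr ⊔ Kc = ⊤ := by
      rw [eq_top_iff]
      intro x _
      have h1 : P x ∈ Kr := by
        have := congrFun (congrArg DFunLike.coe hPidem) x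
        simp only [ContinuousLinearMap.mul_apply] at this
        simp [hKr, LinearMap.mem_ker, ContinuousLinearMap.sub_apply, this]
      have h2 : x - P x ∈ Kc := by
        have := congrFun (congrArg DFunLike.coe hPidem) x
        simp only [ContinuousLinearMap.mul_apply] at this
        simp [hKc, LinearMap.mem_ker, map_sub, this]
      have : x = P x + (x - P x) := by abel
      rw [this]
      exact Submodule.add_mem_sup h1 h2
    have : FiniteDimensional ℂ (⊤ : Submodule ℂ H) := by
      rw [← hsup]; infer_instance
    exact hinf ((Submodule.topEquiv (R := ℂ) (M := H)).finiteDimensional)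
  -- the isometry
  obtain ⟨bH⟩ := exists_hilbertBasis_nat H hinf
  obtain ⟨bK⟩ := exists_hilbertBasis_nat Kr hKrinf
  let e : H ≃ₗᵢ[ℂ] Kr := bH.repr.trans bK.repr.symm
  let V : H →L[ℂ] H := Kr.subtypeL.comp (e.toLinearIsometry.toContinuousLinearMap)
  have hVapp : ∀ x, V x = ((e x : Kr) : H) := fun x => rfl
  have hVmem : ∀ x, V x ∈ Kr := fun x => (e x).2
  have hV1 : star V * V = 1 := by
    rw [ContinuousLinearMap.star_eq_adjoint]
    ext x
    refine ext_inner_right ℂ fun y => ?_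
    rw [ContinuousLinearMap.mul_apply, ContinuousLinearMap.adjoint_inner_left,
      ContinuousLinearMap.one_apply]
    rw [hVapp, hVapp, ← Submodule.coe_inner, e.inner_map_map]
  have hPVx : ∀ x, P (V x) = V x := by
    intro x
    have := hVmem x
    rw [hKr, LinearMap.mem_ker] at this
    have h := congrArg (fun z => P (V x) + z) (by simpa [ContinuousLinearMap.sub_apply] using this :
      V x - P (V x) = 0)
    simpa using h.symm
  have hPV : P * V = V := by ext x; exact hPVx x
  have hVsurj : ∀ y ∈ Kr, ∃ x, V x = y := by
    intro y hy
    exact ⟨e.symm ⟨y, hy⟩, by rw [hVapp, e.apply_symm_apply]⟩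
  -- V V* = P
  have hQ : V * star V = P := by
    have h1 : P * (V * star V) = V * star V := by
      ext x
      simp only [ContinuousLinearMap.mul_apply]
      exact hPVx _
    have h2 : (V * star V) * P = P := by
      ext x
      simp only [ContinuousLinearMap.mul_apply]
      have hy : P x ∈ Kr := by
        have := congrFun (congrArg DFunLike.coe hPidem) x
        simp only [ContinuousLinearMap.mul_apply] at this
        simp [hKr, LinearMap.mem_ker, ContinuousLinearMap.sub_apply, this]
      obtain ⟨u, hu⟩ := hVsurj _ hy
      have hsVu : star V (V u) = u := by
        have := congrFun (congrArg DFunLike.coe hV1) u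
        simpa [ContinuousLinearMap.mul_apply] using this
      rw [← hu, hsVu]
    have hQstar : star (V * star V) = V * star V := by rw [star_mul, star_star]
    have h3 := congrArg star h2
    rw [star_mul, hPstar, hQstar] at h3
    -- h3 : P * (V * star V) = star P ... check
    rw [h3] at h1
    exact h1.symm ▸ h1
  have hγ1 : V * star V = γ 1 := by rw [hQ, hP]
  let γ₀ : A →⋆ₐ[ℂ] (H →L[ℂ] H) :=
  { toFun := fun a => star V * γ a * V
    map_one' := by
      show star V * γ 1 * V = 1
      rw [← hP, mul_assoc, hPV, hV1]
    map_mul' := by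
      intro a b
      have : (star V * γ a * V) * (star V * γ b * V) = star V * γ (a * b) * V := ?_
      · exact this.symm
      simp only [mul_assoc]
      rw [show V * (star V * (γ b * V)) = (V * star V) * (γ b * V) by rw [mul_assoc], hγ1]
      simp only [← mul_assoc]
      rw [mul_assoc (star V) (γ a) (γ 1), ← map_mul γ a 1, mul_one,
        mul_assoc (star V) (γ a) (γ b), ← map_mul γ a b]
    map_zero' := by simp
    map_add' := by intro a b; simp [map_add, mul_add, add_mul]
    commutes' := by
      intro c
      show star V * γ (algebraMap ℂ A c) * V = algebraMap ℂ (H →L[ℂ] H) c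
      rw [Algebra.algebraMap_eq_smul_one, Algebra.algebraMap_eq_smul_one, map_smul,
        mul_smul_comm, smul_mul_assoc, ← hP, mul_assoc, hPV, hV1]
    map_star' := by
      intro a
      have : star (star V * γ a * V) = star V * γ (star a) * V := ?_
      · exact this.symm
      rw [star_mul, star_mul, star_star, map_star, ← mul_assoc] }
  refine hnontrivial V hV1 ⟨γ₀, fun a => ?_⟩
  show π (star V * γ a * V) = π (star V) * ρ a * π V
  rw [map_mul, map_mul, hγ]
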